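/- Under Assumption 1 with 0 ≤ ε < 1, any optimal solution X_opt of problem P(A,r) satisfies, for every column index i, ||v_i − V X_opt(:,i)||_1 ≤ 4ε/(1−ε), where v_i is the i-th column of V. -/

import Mathlib

noncomputable section
open Matrix
open scoped Classical

/-- Entrywise L1 norm of a vector. -/
def l1 {α : Type*} [Fintype α] (v : α → ℝ) : ℝ := ∑ i, |v i|

/-- Induced L1 norm of a matrix (maximum column sum of absolute values). -/
def ml1 {α β : Type*} [Fintype α] [Fintype β] (M : Matrix α β ℝ) : ℝ :=
  sSup (Set.range fun j => ∑ i, |M i j|)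

/-- Feasible set of problem P(A,r). -/
def Feas {ι : Type*} [Fintype ι] [DecidableEq ι] (X : Matrix ι ι ℝ) (r : ℕ) : Prop :=
  Matrix.trace X = (r : ℝ) ∧ (∀ i, X i i ≤ 1) ∧ (∀ i j, 0 ≤ X i j) ∧
    (∀ i j, X i j ≤ X i i)

/-- κ(W) = min over j of min over nonnegative z (supported off j) of
    ‖w_j − W(:,R∖{j}) z‖₁. -/
def kappa {d r : ℕ} (W : Matrix (Fin d) (Fin r) ℝ) : ℝ :=
  sInf {c | ∃ (j : Fin r) (z : Fin r → ℝ), (∀ k, 0 ≤ z k) ∧ z j = 0 ∧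
    c = l1 (fun i => W i j - ∑ k, W i k * z k)}

/-- ω(W) = min over distinct pairs of ‖w_{j₁} − w_{j₂}‖₁. -/
def omegaW {d r : ℕ} (W : Matrix (Fin d) (Fin r) ℝ) : ℝ :=
  sInf {c | ∃ j₁ j₂ : Fin r, j₁ ≠ j₂ ∧ c = l1 (fun i => W i j₁ - W i j₂)}

/-- β = maximum entry of H̄. -/
def betaH {r m : ℕ} (Hb : Matrix (Fin r) (Fin m) ℝ) : ℝ :=
  sSup (Set.range fun p : Fin r × Fin m => Hb p.1 p.2)

lemma l1_col_le_ml1 {α β : Type*} [Fintype α] [Fintype β] (M : Matrix α β ℝ) (j : β) :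
    (∑ i, |M i j|) ≤ ml1 M :=
  le_csSup (Set.Finite.bddAbove (Set.finite_range _)) ⟨j, rfl⟩

lemma ml1_le {α β : Type*} [Fintype α] [Fintype β] [Nonempty β] (M : Matrix α β ℝ) {c : ℝ}
    (h : ∀ j, (∑ i, |M i j|) ≤ c) : ml1 M ≤ c :=
  csSup_le (Set.range_nonempty _) (by rintro x ⟨j, rfl⟩; exact h j)

lemma l1_matvec {α β : Type*} [Fintype α] [Fintype β] (M : Matrix α β ℝ) (x : β → ℝ) :
    l1 (fun k => ∑ u, M k u * x u) ≤ ml1 M * l1 x := by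
  unfold l1
  calc ∑ k, |∑ u, M k u * x u| ≤ ∑ k, ∑ u, |M k u * x u| :=
        Finset.sum_le_sum fun k _ => Finset.abs_sum_le_sum_abs _ _
    _ = ∑ u, ∑ k, |M k u| * |x u| := by rw [Finset.sum_comm]; simp [abs_mul]
    _ = ∑ u, (∑ k, |M k u|) * |x u| := by simp [Finset.sum_mul]
    _ ≤ ∑ u, ml1 M * |x u| :=
        Finset.sum_le_sum fun u _ =>
          mul_le_mul_of_nonneg_right (l1_col_le_ml1 M u) (abs_nonneg _)
    _ = ml1 M * ∑ u, |x u| := by rw [Finset.mul_sum]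

/-- For an optimal solution of P(A,r): ‖v_i − V X_opt(:,i)‖₁ ≤ 4ε/(1−ε) for every i. -/
theorem opt_approx_bound
    {d r m : ℕ} (W : Matrix (Fin d) (Fin r) ℝ) (Hbar : Matrix (Fin r) (Fin m) ℝ)
    (σ : Equiv.Perm (Fin r ⊕ Fin m))
    (N A V : Matrix (Fin d) (Fin r ⊕ Fin m) ℝ)
    (H : Matrix (Fin r) (Fin r ⊕ Fin m) ℝ) (ε : ℝ)
    (hW : ∀ i j, 0 ≤ W i j) (hHbar : ∀ i j, 0 ≤ Hbar i j)
    (hH : H = fun j u => Matrix.fromCols (1 : Matrix (Fin r) (Fin r) ℝ) Hbar j (σ u))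
    (hV : V = W * H) (hA : A = V + N)
    (hVcol : ∀ u, l1 (fun i => V i u) = 1)
    (hWcol : ∀ j, l1 (fun i => W i j) = 1)
    (hHcol : ∀ u, l1 (fun j => H j u) = 1)
    (hε0 : 0 ≤ ε) (hε1 : ε < 1) (hN : ml1 N ≤ ε)
    (Xopt : Matrix (Fin r ⊕ Fin m) (Fin r ⊕ Fin m) ℝ)
    (hfeas : Feas Xopt r)
    (hopt : ∀ X : Matrix (Fin r ⊕ Fin m) (Fin r ⊕ Fin m) ℝ,
      Feas X r → ml1 (A - A * Xopt) ≤ ml1 (A - A * X)) :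
    ∀ i, l1 (fun k => V k i - (V * Xopt) k i) ≤ 4 * ε / (1 - ε) := by
  intro i
  have hne : Nonempty (Fin r ⊕ Fin m) := ⟨i⟩
  -- basic facts about H
  have hHnn : ∀ j u, 0 ≤ H j u := by
    intro j u
    rw [hH]
    cases h : σ u with
    | inl k => simp [Matrix.fromCols, h, Matrix.one_apply]; split <;> norm_num
    | inr k => simpa [Matrix.fromCols, h] using hHbar j k
  have hHsum : ∀ u, ∑ j, H j u = 1 := by
    intro u
    have : ∑ j, H j u = ∑ j, |H j u| :=
      Finset.sum_congr rfl fun j _ => (abs_of_nonneg (hHnn j u)).symm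
    rw [this]; exact hHcol u
  have hHle1 : ∀ j u, H j u ≤ 1 := by
    intro j u
    calc H j u ≤ ∑ j', H j' u :=
          Finset.single_le_sum (fun j' _ => hHnn j' u) (Finset.mem_univ j)
      _ = 1 := hHsum u
  have hHdiag : ∀ (u : Fin r ⊕ Fin m) (j : Fin r), σ u = Sum.inl j → H j u = 1 := by
    intro u j h
    rw [hH]
    simp [Matrix.fromCols, h, Matrix.one_apply]
  have hVnn : ∀ k u, 0 ≤ V k u := by
    intro k u
    rw [hV, Matrix.mul_apply]
    exact Finset.sum_nonneg fun j _ => mul_nonneg (hW k j) (hHnn j u)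
  have hVsum : ∀ u, ∑ k, V k u = 1 := by
    intro u
    have : ∑ k, V k u = ∑ k, |V k u| :=
      Finset.sum_congr rfl fun k _ => (abs_of_nonneg (hVnn k u)).symm
    rw [this]; exact hVcol u
  -- the ideal feasible solution
  set Xs : Matrix (Fin r ⊕ Fin m) (Fin r ⊕ Fin m) ℝ :=
    fun u v => Sum.elim (fun j => H j v) (fun _ => 0) (σ u) with hXs
  have hXsapp : ∀ u v, Xs u v = Sum.elim (fun j => H j v) (fun _ => 0) (σ u) := fun _ _ => rfl
  have hXsnn : ∀ u v, 0 ≤ Xs u v := by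
    intro u v
    rw [hXsapp]
    cases h : σ u with
    | inl j => simpa [h] using hHnn j v
    | inr j => simp [h]
  have hXscol : ∀ v, ∑ u, Xs u v = 1 := by
    intro v
    have := Equiv.sum_comp σ.symm (fun u => Xs u v)
    rw [← this]
    have : ∀ s : Fin r ⊕ Fin m, Xs (σ.symm s) v = Sum.elim (fun j => H j v) (fun _ => 0) s := by
      intro s; rw [hXsapp, Equiv.apply_symm_apply]
    simp only [this]
    rw [Fintype.sum_sum_type]
    simp [hHsum v]
  have hfeasXs : Feas Xs r := by
    refine ⟨?_, ?_, hXsnn, ?_⟩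
    · unfold Matrix.trace Matrix.diag
      have := Equiv.sum_comp σ.symm (fun u => Xs u u)
      rw [← this]
      have h2 : ∀ s : Fin r ⊕ Fin m,
          Xs (σ.symm s) (σ.symm s) = Sum.elim (fun j => H j (σ.symm s)) (fun _ => 0) s := by
        intro s; rw [hXsapp, Equiv.apply_symm_apply]
      simp only [h2]
      rw [Fintype.sum_sum_type]
      have h3 : ∀ j : Fin r, H j (σ.symm (Sum.inl j)) = 1 := fun j =>
        hHdiag _ j (Equiv.apply_symm_apply σ _)
      simp [h3]
    · intro u
      rw [hXsapp]
      cases h : σ u with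
      | inl j => simpa [h] using hHle1 j u
      | inr j => simp [h]
    · intro u v
      rw [hXsapp, hXsapp]
      cases h : σ u with
      | inl j =>
        simp only [h, Sum.elim_inl]
        rw [hHdiag u j h]; exact hHle1 j v
      | inr j => simp [h]
  -- V * Xs = V
  have hVXs : V * Xs = V := by
    ext k v
    rw [Matrix.mul_apply]
    have := Equiv.sum_comp σ.symm (fun u => V k u * Xs u v)
    rw [← this]
    have h2 : ∀ s : Fin r ⊕ Fin m,
        V k (σ.symm s) * Xs (σ.symm s) v
          = V k (σ.symm s) * Sum.elim (fun j => H j v) (fun _ => 0) s := by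
      intro s; rw [hXsapp, Equiv.apply_symm_apply]
    simp only [h2]
    rw [Fintype.sum_sum_type]
    have h3 : ∀ j : Fin r, V k (σ.symm (Sum.inl j)) = W k j := by
      intro j
      rw [hV, Matrix.mul_apply]
      have h4 : ∀ j' : Fin r, H j' (σ.symm (Sum.inl j)) = (1 : Matrix (Fin r) (Fin r) ℝ) j' j := by
        intro j'
        rw [hH]
        simp [Matrix.fromCols, Equiv.apply_symm_apply]
      simp only [h4, Matrix.one_apply]
      simp
    simp only [Sum.elim_inl, Sum.elim_inr, mul_zero, Finset.sum_const_zero, add_zero, h3]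
    rw [hV, Matrix.mul_apply]
  -- the optimal objective is at most 2ε
  have hXscolabs : ∀ v, l1 (fun u => Xs u v) = 1 := by
    intro v
    unfold l1
    have : ∑ u, |Xs u v| = ∑ u, Xs u v :=
      Finset.sum_congr rfl fun u _ => abs_of_nonneg (hXsnn u v)
    rw [this]; exact hXscol v
  have hobj : ml1 (A - A * Xopt) ≤ 2 * ε := by
    refine (hopt Xs hfeasXs).trans ?_
    have hAAXs : A - A * Xs = N - N * Xs := by
      rw [hA, Matrix.add_mul, hVXs]; abel
    rw [hAAXs]
    refine ml1_le _ fun v => ?_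
    have h1 : ∑ k, |(N - N * Xs) k v| ≤ (∑ k, |N k v|) + ∑ k, |(N * Xs) k v| := by
      rw [← Finset.sum_add_distrib]
      refine Finset.sum_le_sum fun k _ => ?_
      simp only [Matrix.sub_apply]
      exact abs_sub _ _
    have h2 : ∑ k, |(N * Xs) k v| ≤ ε := by
      have := l1_matvec N (fun u => Xs u v)
      rw [hXscolabs v, mul_one] at this
      unfold l1 at this
      simp only [Matrix.mul_apply]
      exact this.trans hN
    have h3 : ∑ k, |N k v| ≤ ε := (l1_col_le_ml1 N v).trans hN
    linarith
  -- main estimate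
  set θ := l1 (fun k => V k i - (V * Xopt) k i) with hθ
  set s := ∑ u, Xopt u i with hs
  have hXoptnn := hfeas.2.2.1
  have hsl1 : l1 (fun u => Xopt u i) = s := by
    unfold l1
    exact Finset.sum_congr rfl fun u _ => abs_of_nonneg (hXoptnn u i)
  have hsnn : 0 ≤ s := Finset.sum_nonneg fun u _ => hXoptnn u i
  -- s ≤ 1 + θ
  have hs1θ : s ≤ 1 + θ := by
    have h1 : ∑ k, (V * Xopt) k i = s := by
      simp only [Matrix.mul_apply]
      rw [Finset.sum_comm]
      have : ∀ u : Fin r ⊕ Fin m, ∑ k, V k u * Xopt u i = Xopt u i := by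
        intro u
        rw [← Finset.sum_mul, hVsum u, one_mul]
      simp only [this]
      rfl
    calc s = ∑ k, (V * Xopt) k i := h1.symm
      _ ≤ ∑ k, |(V * Xopt) k i| := Finset.sum_le_sum fun k _ => le_abs_self _
      _ ≤ ∑ k, (|V k i| + |V k i - (V * Xopt) k i|) := by
          refine Finset.sum_le_sum fun k _ => ?_
          calc |(V * Xopt) k i| = |V k i - (V k i - (V * Xopt) k i)| := by ring_nf
            _ ≤ |V k i| + |V k i - (V * Xopt) k i| := abs_sub _ _
      _ = (∑ k, |V k i|) + ∑ k, |V k i - (V * Xopt) k i| := Finset.sum_add_distrib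
      _ = 1 + θ := by
          have h := hVcol i
          unfold l1 at h
          rw [hθ]; unfold l1; rw [h]
  -- θ ≤ 3ε + ε s
  have hθbound : θ ≤ 3 * ε + ε * s := by
    have hkey : ∀ k, V k i - (V * Xopt) k i
        = ((A - A * Xopt) k i - N k i) + (N * Xopt) k i := by
      intro k
      simp only [Matrix.sub_apply, hA, Matrix.add_mul, Matrix.add_apply]
      ring
    have h1 : θ ≤ (∑ k, |(A - A * Xopt) k i|) + (∑ k, |N k i|) + ∑ k, |(N * Xopt) k i| := by
      rw [hθ]; unfold l1
      calc ∑ k, |V k i - (V * Xopt) k i|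
          ≤ ∑ k, (|(A - A * Xopt) k i| + |N k i| + |(N * Xopt) k i|) := by
            refine Finset.sum_le_sum fun k _ => ?_
            rw [hkey k]
            calc |((A - A * Xopt) k i - N k i) + (N * Xopt) k i|
                ≤ |(A - A * Xopt) k i - N k i| + |(N * Xopt) k i| := abs_add_le _ _
              _ ≤ |(A - A * Xopt) k i| + |N k i| + |(N * Xopt) k i| := by
                  have := abs_sub ((A - A * Xopt) k i) (N k i)
                  linarith
        _ = (∑ k, |(A - A * Xopt) k i|) + (∑ k, |N k i|) + ∑ k, |(N * Xopt) k i| := by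
            rw [Finset.sum_add_distrib, Finset.sum_add_distrib]
    have h2 : ∑ k, |(A - A * Xopt) k i| ≤ 2 * ε := (l1_col_le_ml1 _ i).trans hobj
    have h3 : ∑ k, |N k i| ≤ ε := (l1_col_le_ml1 N i).trans hN
    have h4 : ∑ k, |(N * Xopt) k i| ≤ ε * s := by
      have := l1_matvec N (fun u => Xopt u i)
      rw [hsl1] at this
      unfold l1 at this
      simp only [Matrix.mul_apply]
      exact this.trans (mul_le_mul_of_nonneg_right hN hsnn)
    linarith
  have hεθ : ε * s ≤ ε * (1 + θ) := mul_le_mul_of_nonneg_left hs1θ hε0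
  have h1ε : (0:ℝ) < 1 - ε := by linarith
  rw [le_div_iff₀ h1ε]
  nlinarith [hθbound, hεθ]
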